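/- Let p: ℕ → (0,1) with p(n) → 0, and let l: ℕ → ℕ satisfy (1 - p(n))^{l(n)} · n · p(n) → λ for some λ ∈ (0,∞), and suppose n·p(n) → ∞. Then l(n)·p(n)/log(n·p(n)) → 1 as n → ∞. -/

import Mathlib

open Real Filter

/-- if `p(n) ∈ (0,1)`, `p(n) → 0`, `n p(n) → ∞` and
`(1-p(n))^{l(n)} n p(n) → λ ∈ (0,∞)`, then `l(n) p(n) / log(n p(n)) → 1`. -/
theorem cluster_spacing_asymptotics (p : ℕ → ℝ) (hp : ∀ n, p n ∈ Set.Ioo (0 : ℝ) 1)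
    (hp0 : Tendsto p atTop (nhds 0))
    (l : ℕ → ℕ) (lam : ℝ) (hlam : 0 < lam)
    (hconv : Tendsto (fun n : ℕ => (1 - p n) ^ l n * ((n : ℝ) * p n)) atTop (nhds lam))
    (hnp : Tendsto (fun n : ℕ => (n : ℝ) * p n) atTop atTop) :
    Tendsto (fun n : ℕ => (l n : ℝ) * p n / Real.log ((n : ℝ) * p n)) atTop (nhds 1) := by
  have h1p : ∀ n : ℕ, 0 < 1 - p n := fun n => by have := (hp n).2; linarith
  have hppos : ∀ n : ℕ, 0 < p n := fun n => (hp n).1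
  have hnp_pos : ∀ᶠ n : ℕ in atTop, 0 < (n : ℝ) * p n := hnp.eventually_gt_atTop 0
  -- log of the product tends to log lam
  have hloglam : Tendsto (fun n : ℕ => Real.log ((1 - p n) ^ l n * ((n : ℝ) * p n)))
      atTop (nhds (Real.log lam)) :=
    (Real.continuousAt_log hlam.ne').tendsto.comp hconv
  have heq : ∀ᶠ n in atTop, Real.log ((1 - p n) ^ l n * ((n : ℝ) * p n))
      = (l n : ℝ) * Real.log (1 - p n) + Real.log ((n : ℝ) * p n) := by
    filter_upwards [hnp_pos] with n hn
    rw [Real.log_mul (pow_ne_zero _ (h1p n).ne') hn.ne', Real.log_pow]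
  have hf : Tendsto (fun n : ℕ => (l n : ℝ) * Real.log (1 - p n) + Real.log ((n : ℝ) * p n))
      atTop (nhds (Real.log lam)) := hloglam.congr' heq
  have hlogtop : Tendsto (fun n : ℕ => Real.log ((n : ℝ) * p n)) atTop atTop :=
    Real.tendsto_log_atTop.comp hnp
  have h2 : Tendsto (fun n : ℕ =>
      ((l n : ℝ) * Real.log (1 - p n) + Real.log ((n : ℝ) * p n)) / Real.log ((n : ℝ) * p n))
      atTop (nhds 0) := hf.div_atTop hlogtop
  have hlogpos : ∀ᶠ n : ℕ in atTop, 0 < Real.log ((n : ℝ) * p n) := hlogtop.eventually_gt_atTop 0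
  -- l log(1-p) / log(np) → -1
  have h3 : Tendsto (fun n : ℕ => (l n : ℝ) * Real.log (1 - p n) / Real.log ((n : ℝ) * p n))
      atTop (nhds (-1)) := by
    have := h2.sub_const 1
    rw [zero_sub] at this
    refine this.congr' ?_
    filter_upwards [hlogpos] with n hn
    rw [add_div, div_self hn.ne', add_sub_cancel_right]
  -- log(1-p)/(-p) → 1  (derivative of log at 1)
  have hd : HasDerivAt Real.log 1 1 := by simpa using Real.hasDerivAt_log one_ne_zero
  have hslope := hasDerivAt_iff_tendsto_slope.mp hd
  have tend1p : Tendsto (fun n : ℕ => 1 - p n) atTop (nhdsWithin 1 {(1 : ℝ)}ᶜ) := by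
    apply tendsto_nhdsWithin_of_tendsto_nhds_of_eventually_within
    · simpa using tendsto_const_nhds.sub hp0
    · exact Eventually.of_forall fun n => by
        simp only [Set.mem_compl_iff, Set.mem_singleton_iff]
        have := hppos n; intro h; nlinarith
  have h4 : Tendsto (fun n : ℕ => slope Real.log 1 (1 - p n)) atTop (nhds 1) :=
    hslope.comp tend1p
  have h5 : Tendsto (fun n : ℕ => Real.log (1 - p n) / (-(p n))) atTop (nhds 1) := by
    refine h4.congr fun n => ?_
    rw [slope_def_field]
    simp [Real.log_one]
  -- p / log(1-p) → -1
  have h6 : Tendsto (fun n : ℕ => p n / Real.log (1 - p n)) atTop (nhds (-1)) := by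
    have := (h5.inv₀ one_ne_zero).neg
    rw [inv_one] at this
    refine this.congr fun n => ?_
    rw [inv_div]
    ring
  -- combine
  have hmul := h3.mul h6
  have : (-1 : ℝ) * -1 = 1 := by norm_num
  rw [this] at hmul
  refine hmul.congr' ?_
  filter_upwards with n
  have hB : Real.log (1 - p n) ≠ 0 :=
    (Real.log_neg (h1p n) (by have := hppos n; linarith)).ne
  have : (l n : ℝ) * Real.log (1 - p n) / Real.log ((n : ℝ) * p n) * (p n / Real.log (1 - p n))
      = (l n : ℝ) * p n / Real.log ((n : ℝ) * p n) * (Real.log (1 - p n) / Real.log (1 - p n)) := by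
    ring
  rw [this, div_self hB, mul_one]
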